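/- Let n = 2m' be an even positive integer, let m : ZMod n, and set k = 2 * m and h = m + (m' : ZMod n). Define the simple graph F'_k on ZMod n in which distinct vertices i and j are adjacent if and only if either {i, j} = {m, h}, or (i ∉ {m, h} and j ∉ {m, h} and i + j = k). Then every vertex of F'_k has exactly one neighbor, i.e., for every v : ZMod n there is a unique w with F'_k.Adj v w. (Thus F'_k is a one-factor of the complete graph on ZMod n.) -/

import Mathlib

/-- The modified graph `F'` on `ZMod n` with parameters `m`, `h`, `k`:
distinct vertices `i` and `j` are adjacent iff either `{i, j} = {m, h}`, or
(`i ∉ {m, h}`, `j ∉ {m, h}` and `i + j = k`). -/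
def F' (n : ℕ) (m h k : ZMod n) : SimpleGraph (ZMod n) where
  Adj i j := i ≠ j ∧
    (({i, j} : Set (ZMod n)) = {m, h} ∨
      (i ∉ ({m, h} : Set (ZMod n)) ∧ j ∉ ({m, h} : Set (ZMod n)) ∧ i + j = k))
  symm := ⟨by
    rintro i j ⟨h1, h2 | ⟨h2, h3, h4⟩⟩
    · exact ⟨h1.symm, Or.inl (by rwa [Set.pair_comm j i])⟩
    · exact ⟨h1.symm, Or.inr ⟨h3, h2, by rwa [add_comm]⟩⟩⟩
  loopless := ⟨fun i ⟨h, _⟩ => h rfl⟩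

theorem stmt_2 (m' : ℕ) (hm' : 0 < m') (m : ZMod (2 * m')) :
    ∀ v : ZMod (2 * m'),
      ∃! w : ZMod (2 * m'),
        (F' (2 * m') m (m + (m' : ZMod (2 * m'))) (2 * m)).Adj v w := by
  haveI : NeZero (2 * m') := ⟨by omega⟩
  have hM0 : (m' : ZMod (2 * m')) ≠ 0 := by
    intro hc
    have := Nat.le_of_dvd hm' ((ZMod.natCast_eq_zero_iff _ _).mp hc)
    omega
  have hMM : (m' : ZMod (2 * m')) + (m' : ZMod (2 * m')) = 0 := by
    have h2 : ((2 * m' : ℕ) : ZMod (2 * m')) = 0 := ZMod.natCast_self _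
    push_cast at h2
    linear_combination h2
  have key : ∀ x : ZMod (2 * m'), x + x = 0 → x = 0 ∨ x = (m' : ZMod (2 * m')) := by
    intro x hx
    have hvlt := ZMod.val_lt x
    have hdvd : (2 * m') ∣ (x.val + x.val) := by
      apply (ZMod.natCast_eq_zero_iff _ _).mp
      push_cast
      rw [ZMod.natCast_val, ZMod.cast_id]
      exact hx
    have hval : x.val = 0 ∨ x.val = m' := by
      rcases hdvd with ⟨c, hc⟩
      have hc2 : c < 2 := by nlinarith
      interval_cases c <;> omega
    rcases hval with h | h
    · left; exact (ZMod.val_eq_zero x).mp h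
    · right
      have h2 : ((x.val : ℕ) : ZMod (2 * m')) = (m' : ZMod (2 * m')) := by rw [h]
      rwa [ZMod.natCast_val, ZMod.cast_id] at h2
  have hne : m ≠ m + (m' : ZMod (2 * m')) := by
    intro hc
    apply hM0
    linear_combination -hc
  intro v
  by_cases h1 : v = m
  · refine ⟨m + (m' : ZMod (2 * m')), ⟨by rw [h1]; exact hne, Or.inl (by rw [h1])⟩, ?_⟩
    rintro w ⟨hwne, hcase | ⟨hw1, _, _⟩⟩
    · have hmem : w ∈ ({m, m + (m' : ZMod (2 * m'))} : Set (ZMod (2 * m'))) := by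
        rw [← hcase]; simp
      rcases hmem with h | h
      · exact absurd (h1.trans h.symm) hwne
      · exact h
    · exact absurd (by simp [h1]) hw1
  · by_cases h2 : v = m + (m' : ZMod (2 * m'))
    · refine ⟨m, ⟨by rw [h2]; exact hne.symm, Or.inl (by rw [h2, Set.pair_comm])⟩, ?_⟩
      rintro w ⟨hwne, hcase | ⟨hw1, _, _⟩⟩
      · have hmem : w ∈ ({m, m + (m' : ZMod (2 * m'))} : Set (ZMod (2 * m'))) := by
          rw [← hcase]; simp
        rcases hmem with h | h
        · exact h
        · exact absurd (h2.trans h.symm) hwne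
      · exact absurd (by simp [h2]) hw1
    · have hvnot : v ∉ ({m, m + (m' : ZMod (2 * m'))} : Set (ZMod (2 * m'))) := by
        simp [h1, h2]
      have hwnot : (2 * m - v) ∉ ({m, m + (m' : ZMod (2 * m'))} : Set (ZMod (2 * m'))) := by
        rintro (h | h)
        · exact h1 (by linear_combination -h)
        · apply h2
          rw [Set.mem_singleton_iff] at h
          linear_combination -h - hMM
      refine ⟨2 * m - v, ⟨?_, Or.inr ⟨hvnot, hwnot, by ring⟩⟩, ?_⟩
      · intro hc
        rcases key (v - m) (by linear_combination hc) with h | h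
        · exact h1 (by linear_combination h)
        · exact h2 (by linear_combination h)
      · rintro w ⟨hwne, hcase | ⟨_, _, hsum⟩⟩
        · exfalso
          apply hvnot
          rw [← hcase]; simp
        · linear_combination hsum
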